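/- Let (X, d) be a complete metric space and T : X → X continuous. Suppose there are points x, y ∈ X and ε > 0 such that x ∈ J(w) and w ∈ J(w) for every w ∈ B(y, ε). Then the set D = { z ∈ closure(B(y, ε)) : x ∈ L(z) and z ∈ L(z) } is a dense G_δ subset of closure(B(y, ε)). -/

import Mathlib

open Filter Topology Set Metric

/-- The limit set `L(x)`: limits of subsequences `T^[kₙ] x` along a strictly
increasing sequence of positive integers. -/
def limitSet {X : Type*} [TopologicalSpace X] (T : X → X) (x : X) : Set X :=
  {y | ∃ k : ℕ → ℕ, StrictMono k ∧ (∀ n, 0 < k n) ∧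
    Tendsto (fun n => T^[k n] x) atTop (𝓝 y)}

/-- The extended (prolongational) limit set `J(x)`. -/
def extLimitSet {X : Type*} [TopologicalSpace X] (T : X → X) (x : X) : Set X :=
  {y | ∃ k : ℕ → ℕ, StrictMono k ∧ (∀ n, 0 < k n) ∧
    ∃ u : ℕ → X, Tendsto u atTop (𝓝 x) ∧
      Tendsto (fun n => T^[k n] (u n)) atTop (𝓝 y)}

/-- Topological transitivity. -/
def TopTransitive {X : Type*} [TopologicalSpace X] (T : X → X) : Prop :=
  ∀ U V : Set X, IsOpen U → IsOpen V → U.Nonempty → V.Nonempty →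
    ∃ n : ℕ, (T^[n] '' U ∩ V).Nonempty

lemma mem_limitSet_iff {X : Type*} [MetricSpace X] (T : X → X) (z p : X) :
    p ∈ limitSet T z ↔ ∀ m n : ℕ, ∃ k, m < k ∧ dist (T^[k] z) p < 1 / (n + 1) := by
  constructor
  · rintro ⟨k, hk, _, hten⟩ m n
    have hn : (0 : ℝ) < 1 / (n + 1) := by positivity
    obtain ⟨N, hN⟩ := (Metric.tendsto_atTop.1 hten) _ hn
    refine ⟨k (max N (m + 1)), ?_, hN _ (le_max_left _ _)⟩
    calc m < m + 1 := Nat.lt_succ_self m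
      _ ≤ max N (m + 1) := le_max_right _ _
      _ ≤ k (max N (m + 1)) := hk.le_apply
  · intro H
    choose f hf hf' using H
    set k : ℕ → ℕ := fun n => Nat.rec (f 0 0) (fun n ih => f ih (n + 1)) n with hkdef
    have hk0 : k 0 = f 0 0 := rfl
    have hks : ∀ n, k (n + 1) = f (k n) (n + 1) := fun n => rfl
    have hmono : StrictMono k := strictMono_nat_of_lt_succ fun n => by
      rw [hks]; exact hf _ _
    have hpos : ∀ n, 0 < k n := by
      intro n
      calc 0 < k 0 := by rw [hk0]; exact hf 0 0
        _ ≤ k n := hmono.monotone (Nat.zero_le n)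
    have hd : ∀ n, dist (T^[k n] z) p < 1 / (n + 1) := by
      intro n
      cases n with
      | zero => rw [hk0]; simpa using hf' 0 0
      | succ n => rw [hks]; exact hf' (k n) (n + 1)
    refine ⟨k, hmono, hpos, ?_⟩
    rw [tendsto_iff_dist_tendsto_zero]
    exact squeeze_zero (fun n => dist_nonneg) (fun n => (hd n).le)
      tendsto_one_div_add_atTop_nhds_zero_nat

theorem stmt3 {X : Type*} [MetricSpace X] [CompleteSpace X] (T : X → X)
    (hT : Continuous T) (x y : X) (ε : ℝ) (hε : 0 < ε)
    (h : ∀ w ∈ ball y ε, x ∈ extLimitSet T w)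
    (h' : ∀ w ∈ ball y ε, w ∈ extLimitSet T w) :
    IsGδ {z : closure (ball y ε) | x ∈ limitSet T (z : X) ∧ (z : X) ∈ limitSet T (z : X)} ∧
      Dense {z : closure (ball y ε) | x ∈ limitSet T (z : X) ∧ (z : X) ∈ limitSet T (z : X)} := by
  haveI : CompleteSpace (closure (ball y ε)) := isClosed_closure.completeSpace_coe
  set Y := closure (ball y ε)
  set A : ℕ → ℕ → Set Y := fun m n =>
    {z : Y | ∃ k, m < k ∧ dist (T^[k] (z : X)) x < 1 / (n + 1)} with hA
  set B : ℕ → ℕ → Set Y := fun m n =>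
    {z : Y | ∃ k, m < k ∧ dist (T^[k] (z : X)) (z : X) < 1 / (n + 1)} with hB
  have hAopen : ∀ m n, IsOpen (A m n) := by
    intro m n
    have : A m n = ⋃ k, ⋃ _ : m < k, {z : Y | dist (T^[k] (z : X)) x < 1 / (n + 1)} := by
      ext z; simp [hA]
    rw [this]
    exact isOpen_iUnion fun k => isOpen_iUnion fun _ =>
      isOpen_lt (((hT.iterate k).comp continuous_subtype_val).dist continuous_const)
        continuous_const
  have hBopen : ∀ m n, IsOpen (B m n) := by
    intro m n
    have : B m n = ⋃ k, ⋃ _ : m < k, {z : Y | dist (T^[k] (z : X)) (z : X) < 1 / (n + 1)} := by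
      ext z; simp [hB]
    rw [this]
    exact isOpen_iUnion fun k => isOpen_iUnion fun _ =>
      isOpen_lt (((hT.iterate k).comp continuous_subtype_val).dist continuous_subtype_val)
        continuous_const
  have densA : ∀ m n, Dense (A m n) := by
    intro m n
    rw [Metric.dense_iff]
    intro z δ hδ
    have hz := z.2
    rw [Metric.mem_closure_iff] at hz
    obtain ⟨w, hw, hwd⟩ := hz (δ / 2) (by positivity)
    have hn : (0 : ℝ) < 1 / (n + 1) := by positivity
    obtain ⟨k, hk, hkpos, u, hu, hux⟩ := h w hw
    have e1 : ∀ᶠ j in atTop, m < k j := by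
      filter_upwards [eventually_ge_atTop (m + 1)] with j hj
      exact lt_of_lt_of_le (Nat.lt_succ_self m) (le_trans hj hk.le_apply)
    have e2 : ∀ᶠ j in atTop, dist (T^[k j] (u j)) x < 1 / (n + 1) :=
      eventually_atTop.2 (Metric.tendsto_atTop.1 hux _ hn)
    have e3 : ∀ᶠ j in atTop, dist (u j) w < δ / 2 :=
      eventually_atTop.2 (Metric.tendsto_atTop.1 hu _ (by positivity))
    have e4 : ∀ᶠ j in atTop, u j ∈ ball y ε := hu (isOpen_ball.mem_nhds hw)
    obtain ⟨j, ⟨⟨h1, h2⟩, h3⟩, h4⟩ := (((e1.and e2).and e3).and e4).exists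
    refine ⟨⟨u j, subset_closure h4⟩, ?_, k j, h1, h2⟩
    rw [mem_ball, Subtype.dist_eq]
    calc dist (u j) (z : X) ≤ dist (u j) w + dist w (z : X) := dist_triangle _ _ _
      _ < δ / 2 + δ / 2 := by
          refine add_lt_add h3 ?_
          rw [dist_comm]; exact hwd
      _ = δ := by ring
  have densB : ∀ m n, Dense (B m n) := by
    intro m n
    rw [Metric.dense_iff]
    intro z δ hδ
    have hz := z.2
    rw [Metric.mem_closure_iff] at hz
    obtain ⟨w, hw, hwd⟩ := hz (δ / 2) (by positivity)
    have hn : (0 : ℝ) < 1 / (2 * (n + 1)) := by positivity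
    obtain ⟨k, hk, hkpos, u, hu, hux⟩ := h' w hw
    have e1 : ∀ᶠ j in atTop, m < k j := by
      filter_upwards [eventually_ge_atTop (m + 1)] with j hj
      exact lt_of_lt_of_le (Nat.lt_succ_self m) (le_trans hj hk.le_apply)
    have e2 : ∀ᶠ j in atTop, dist (T^[k j] (u j)) w < 1 / (2 * (n + 1)) :=
      eventually_atTop.2 (Metric.tendsto_atTop.1 hux _ hn)
    have e3 : ∀ᶠ j in atTop, dist (u j) w < min (δ / 2) (1 / (2 * (n + 1))) :=
      eventually_atTop.2 (Metric.tendsto_atTop.1 hu _ (lt_min (by positivity) hn))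
    have e4 : ∀ᶠ j in atTop, u j ∈ ball y ε := hu (isOpen_ball.mem_nhds hw)
    obtain ⟨j, ⟨⟨h1, h2⟩, h3⟩, h4⟩ := (((e1.and e2).and e3).and e4).exists
    refine ⟨⟨u j, subset_closure h4⟩, ?_, k j, h1, ?_⟩
    · rw [mem_ball, Subtype.dist_eq]
      calc dist (u j) (z : X) ≤ dist (u j) w + dist w (z : X) := dist_triangle _ _ _
        _ < δ / 2 + δ / 2 := by
            refine add_lt_add (lt_of_lt_of_le h3 (min_le_left _ _)) ?_
            rw [dist_comm]; exact hwd
        _ = δ := by ring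
    · calc dist (T^[k j] (u j)) (u j)
          ≤ dist (T^[k j] (u j)) w + dist w (u j) := dist_triangle _ _ _
        _ < 1 / (2 * (n + 1)) + 1 / (2 * (n + 1)) := by
            refine add_lt_add h2 ?_
            rw [dist_comm]; exact lt_of_lt_of_le h3 (min_le_right _ _)
        _ = 1 / (n + 1) := by rw [← add_div, div_eq_div_iff (by positivity) (by positivity)]; ring
  -- assemble
  set F : (ℕ × ℕ) ⊕ (ℕ × ℕ) → Set Y := fun q =>
    Sum.rec (fun p => A p.1 p.2) (fun p => B p.1 p.2) q with hF
  have hFopen : ∀ q, IsOpen (F q) := by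
    rintro (⟨m, n⟩ | ⟨m, n⟩)
    exacts [hAopen m n, hBopen m n]
  have hFdense : ∀ q, Dense (F q) := by
    rintro (⟨m, n⟩ | ⟨m, n⟩)
    exacts [densA m n, densB m n]
  have hSet : {z : Y | x ∈ limitSet T (z : X) ∧ (z : X) ∈ limitSet T (z : X)} = ⋂ q, F q := by
    ext z
    simp only [mem_setOf_eq, mem_iInter, mem_limitSet_iff]
    constructor
    · rintro ⟨hx, hz⟩ (⟨m, n⟩ | ⟨m, n⟩)
      exacts [hx m n, hz m n]
    · intro H
      exact ⟨fun m n => H (Sum.inl (m, n)), fun m n => H (Sum.inr (m, n))⟩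
  rw [hSet]
  exact ⟨IsGδ.iInter fun q => (hFopen q).isGδ,
    dense_iInter_of_isOpen hFopen hFdense⟩
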